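/- Let K be a compact interval and let f : K → ℂ be continuous with f(β) = f₁(β) + i f₂(β). If λ = i r with r > 0 (purely imaginary), then for any ε > 0 there exist real coefficients c_k such that sup_{β∈K} |f(β) − Σ_{k=0}^N c_k (λβ)^k| < ε; i.e., the real span of {β ↦ (λβ)^k : k ≥ 0} is dense in C(K, ℂ). -/

import Mathlib

private lemma sum_split13 (M : ℕ) (c : ℕ → ℂ) (z : ℂ) :
    ∑ j ∈ Finset.range (2 * M), c j * z ^ j =
      ∑ k ∈ Finset.range M, (c (2 * k) * z ^ (2 * k) + c (2 * k + 1) * z ^ (2 * k + 1)) := by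
  induction M with
  | zero => simp
  | succ n ih =>
    rw [Nat.mul_succ, Finset.sum_range_succ, Finset.sum_range_succ, Finset.sum_range_succ, ih,
      add_assoc]

theorem stmt13 (a b r : ℝ) (ha : 0 < a) (hab : a ≤ b) (hr : 0 < r) (f : ℝ → ℂ)
    (hf : ContinuousOn f (Set.Icc a b)) (ε : ℝ) (hε : 0 < ε) :
    ∃ (N : ℕ) (c : ℕ → ℝ), ∀ β ∈ Set.Icc a b,
      ‖f β - ∑ k ∈ Finset.range N,
        (c k : ℂ) * ((Complex.I * r) * β) ^ k‖ < ε := by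
  -- set up change of variables x = (r β)^2
  set A := (r * a) ^ 2 with hA
  set B := (r * b) ^ 2 with hB
  have hra : 0 < r * a := mul_pos hr ha
  have hrb : 0 < r * b := lt_of_lt_of_le hra (by nlinarith)
  have hmem : ∀ x ∈ Set.Icc A B, Real.sqrt x / r ∈ Set.Icc a b := by
    rintro x ⟨h1, h2⟩
    have hs1 : r * a ≤ Real.sqrt x := by
      rw [show r * a = Real.sqrt A by rw [hA, Real.sqrt_sq hra.le]]
      exact Real.sqrt_le_sqrt h1
    have hs2 : Real.sqrt x ≤ r * b := by
      rw [show r * b = Real.sqrt B by rw [hB, Real.sqrt_sq hrb.le]]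
      exact Real.sqrt_le_sqrt h2
    constructor
    · rw [le_div_iff₀ hr]; linarith [hs1]
    · rw [div_le_iff₀ hr]; linarith [hs2]
  have hcont_sub : ContinuousOn (fun x : ℝ => Real.sqrt x / r) (Set.Icc A B) :=
    (Real.continuous_sqrt.continuousOn.div_const r)
  have hg1 : ContinuousOn (fun x : ℝ => (f (Real.sqrt x / r)).re) (Set.Icc A B) :=
    Complex.continuous_re.comp_continuousOn (hf.comp hcont_sub hmem)
  have hsqrt_pos : ∀ x ∈ Set.Icc A B, 0 < Real.sqrt x := fun x hx => by
    have : r * a ≤ Real.sqrt x := by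
      rw [show r * a = Real.sqrt A by rw [hA, Real.sqrt_sq hra.le]]
      exact Real.sqrt_le_sqrt hx.1
    linarith
  have hg2 : ContinuousOn (fun x : ℝ => (f (Real.sqrt x / r)).im / Real.sqrt x)
      (Set.Icc A B) := by
    apply ContinuousOn.div
    · exact Complex.continuous_im.comp_continuousOn (hf.comp hcont_sub hmem)
    · exact Real.continuous_sqrt.continuousOn
    · exact fun x hx => (hsqrt_pos x hx).ne'
  obtain ⟨p, hp⟩ := exists_polynomial_near_of_continuousOn A B _ hg1 (ε / 2) (by linarith)
  obtain ⟨q, hq⟩ := exists_polynomial_near_of_continuousOn A B _ hg2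
      (ε / (2 * (r * b + 1))) (by positivity)
  -- coefficients
  set M := max (p.natDegree + 1) (q.natDegree + 1) with hM
  refine ⟨2 * M, fun j => if j % 2 = 0 then (-1 : ℝ) ^ (j / 2) * p.coeff (j / 2)
    else (-1 : ℝ) ^ (j / 2) * q.coeff (j / 2), fun β hβ => by
    set z : ℂ := Complex.I * r * β with hz
    have hrβ : 0 < r * β := mul_pos hr (lt_of_lt_of_le ha hβ.1)
    set x := (r * β) ^ 2 with hx
    have hxmem : x ∈ Set.Icc A B := by
      constructor
      · rw [hA, hx]
        have h : r * a ≤ r * β := by nlinarith [hβ.1]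
        exact pow_le_pow_left₀ hra.le h 2
      · rw [hB, hx]
        have h : r * β ≤ r * b := by nlinarith [hβ.2]
        exact pow_le_pow_left₀ hrβ.le h 2
    have hsq : Real.sqrt x = r * β := by rw [hx, Real.sqrt_sq hrβ.le]
    have hz2 : z ^ 2 = -(x : ℂ) := by
      rw [hz, hx]
      push_cast
      rw [mul_pow, mul_pow, Complex.I_sq]
      ring
    -- compute the sum
    have hsum : ∑ j ∈ Finset.range (2 * M), ((if j % 2 = 0 then (-1 : ℝ) ^ (j / 2) * p.coeff (j / 2)
          else (-1 : ℝ) ^ (j / 2) * q.coeff (j / 2) : ℝ) : ℂ) * z ^ j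
        = ((p.eval x : ℝ) : ℂ) + Complex.I * (r * β) * ((q.eval x : ℝ) : ℂ) := by
      rw [sum_split13]
      have step : ∀ k ∈ Finset.range M,
          ((if (2 * k) % 2 = 0 then (-1 : ℝ) ^ ((2 * k) / 2) * p.coeff ((2 * k) / 2)
            else (-1 : ℝ) ^ ((2 * k) / 2) * q.coeff ((2 * k) / 2) : ℝ) : ℂ) * z ^ (2 * k)
          + ((if (2 * k + 1) % 2 = 0 then
              (-1 : ℝ) ^ ((2 * k + 1) / 2) * p.coeff ((2 * k + 1) / 2)
            else (-1 : ℝ) ^ ((2 * k + 1) / 2) * q.coeff ((2 * k + 1) / 2) : ℝ) : ℂ) * z ^ (2 * k + 1)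
          = (p.coeff k : ℂ) * (x : ℂ) ^ k
            + Complex.I * (r * β) * ((q.coeff k : ℂ) * (x : ℂ) ^ k) := by
        intro k _
        have e1 : (2 * k) % 2 = 0 := by omega
        have e2 : (2 * k + 1) % 2 = 1 := by omega
        have e3 : (2 * k) / 2 = k := by omega
        have e4 : (2 * k + 1) / 2 = k := by omega
        rw [e1, e2, e3, e4]
        norm_num
        have hpow : z ^ (2 * k) = (-1 : ℂ) ^ k * (x : ℂ) ^ k := by
          rw [pow_mul, hz2, neg_pow]
        have hpow' : z ^ (2 * k + 1) = (-1 : ℂ) ^ k * (x : ℂ) ^ k * z := by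
          rw [pow_succ, hpow]
        have hzval : z = Complex.I * ((r : ℂ) * (β : ℂ)) := by rw [hz]; ring
        rw [hpow, hpow', hzval]
        push_cast
        have hm1 : ((-1 : ℂ) ^ k) * ((-1 : ℂ) ^ k) = 1 := by
          rw [← mul_pow]; norm_num
        linear_combination (((p.coeff k : ℂ)) * (x : ℂ) ^ k
          + Complex.I * (r : ℂ) * (β : ℂ) * ((q.coeff k : ℂ)) * (x : ℂ) ^ k) * hm1
      rw [Finset.sum_congr rfl step, Finset.sum_add_distrib, ← Finset.mul_sum]
      have hpe : p.eval x = ∑ k ∈ Finset.range M, p.coeff k * x ^ k :=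
        Polynomial.eval_eq_sum_range' (lt_of_lt_of_le (Nat.lt_succ_self _) (le_max_left _ _)) x
      have hqe : q.eval x = ∑ k ∈ Finset.range M, q.coeff k * x ^ k :=
        Polynomial.eval_eq_sum_range' (lt_of_lt_of_le (Nat.lt_succ_self _) (le_max_right _ _)) x
      rw [hpe, hqe]
      push_cast
      ring
    rw [hsum]
    -- now estimate
    have h1 := hp x hxmem
    have h2 := hq x hxmem
    have hβval : Real.sqrt x / r = β := by rw [hsq]; field_simp
    rw [hβval] at h1 h2
    rw [hsq] at h2
    set w : ℂ := f β - (((p.eval x : ℝ) : ℂ) + Complex.I * ((r : ℂ) * (β : ℂ)) * ((q.eval x : ℝ) : ℂ)) with hw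
    have hre : w.re = (f β).re - p.eval x := by simp [hw]
    have him : w.im = (f β).im - r * β * q.eval x := by simp [hw]
    have habs : ‖w‖ ≤ |w.re| + |w.im| := Complex.norm_le_abs_re_add_abs_im w
    have h1' : |w.re| < ε / 2 := by rw [hre, abs_sub_comm]; exact h1
    have h2' : |w.im| < ε / 2 := by
      rw [him]
      have : (f β).im - r * β * q.eval x = -((r * β) * (q.eval x - (f β).im / (r * β))) := by
        have hβ0 : β ≠ 0 := (lt_of_lt_of_le ha hβ.1).ne'
        field_simp
        ring
      rw [this, abs_neg, abs_mul, abs_of_pos hrβ]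
      have hb : r * β ≤ r * b := by nlinarith [hβ.2]
      calc r * β * |q.eval x - (f β).im / (r * β)| ≤ (r * b) * (ε / (2 * (r * b + 1))) := by
            apply mul_le_mul hb (le_of_lt h2) (abs_nonneg _) hrb.le
        _ < ε / 2 := by
            rw [show r * b * (ε / (2 * (r * b + 1))) = (r * b * ε) / (2 * (r * b + 1)) by ring,
              div_lt_div_iff₀ (by positivity) (by norm_num)]
            nlinarith
    calc ‖w‖ ≤ |w.re| + |w.im| := habs
      _ < ε / 2 + ε / 2 := add_lt_add h1' h2'
      _ = ε := by ring⟩
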